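/- Let F = F₁ ∪ F₂ be a set of functional dependencies over a relation schema R such that every attribute in Att(F₁) ∩ Att(F₂) is certain. Let U be a CIR over R, U₁ = π_{Att(F₁)}U, and U₂ = π_{Att(F₂)}U. Then U is possibly consistent with respect to F if and only if U₁ is possibly consistent with respect to F₁ and U₂ is possibly consistent with respect to F₂. -/
import Mathlib


/-- Let `F = F₁ ∪ F₂` over schema `R` with all attributes in
`Att(F₁) ∩ Att(F₂)` certain (here: deterministic cells, i.e. cells with a unique
positive-probability value).  Then the CIR `U` is possibly consistent w.r.t. `F` iff the
projection `U₁ = π_{Att(F₁)}U` is possibly consistent w.r.t. `F₁` and `U₂ = π_{Att(F₂)}U`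
is possibly consistent w.r.t. `F₂`.  (A sample of a projection constrains only the cells of
the projected attributes.) -/
theorem stmt4 {Att V ι : Type} [DecidableEq Att]
    (F1 F2 : Finset (Finset Att × Finset Att))
    (p : ι → Att → V → ℝ)
    (hpos : ∀ (i : ι) (a : Att), ∃ v : V, 0 < p i a v)
    (hdet : ∀ a ∈ (F1.sup fun fd => fd.1 ∪ fd.2) ∩ (F2.sup fun fd => fd.1 ∪ fd.2),
      ∀ i : ι, ∃ v : V, ∀ w : V, 0 < p i a w ↔ w = v) :
    ((∃ s : ι → Att → V, (∀ (i : ι) (a : Att), 0 < p i a (s i a)) ∧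
        ∀ fd ∈ F1 ∪ F2, ∀ i j : ι,
          (∀ a ∈ fd.1, s i a = s j a) → ∀ a ∈ fd.2, s i a = s j a)
      ↔ ((∃ s : ι → Att → V,
            (∀ i : ι, ∀ a ∈ (F1.sup fun fd => fd.1 ∪ fd.2), 0 < p i a (s i a)) ∧
            ∀ fd ∈ F1, ∀ i j : ι,
              (∀ a ∈ fd.1, s i a = s j a) → ∀ a ∈ fd.2, s i a = s j a)
          ∧ (∃ s : ι → Att → V,
            (∀ i : ι, ∀ a ∈ (F2.sup fun fd => fd.1 ∪ fd.2), 0 < p i a (s i a)) ∧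
            ∀ fd ∈ F2, ∀ i j : ι,
              (∀ a ∈ fd.1, s i a = s j a) → ∀ a ∈ fd.2, s i a = s j a))) := by
  classical
  constructor
  · rintro ⟨s, hs, hfd⟩
    exact ⟨⟨s, fun i a _ => hs i a, fun fd hf => hfd fd (Finset.mem_union_left _ hf)⟩,
           ⟨s, fun i a _ => hs i a, fun fd hf => hfd fd (Finset.mem_union_right _ hf)⟩⟩
  · rintro ⟨⟨s1, hs1, hf1⟩, ⟨s2, hs2, hf2⟩⟩
    set A1 := F1.sup fun fd => fd.1 ∪ fd.2 with hA1
    set A2 := F2.sup fun fd => fd.1 ∪ fd.2 with hA2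
    refine ⟨fun i a => if a ∈ A1 then s1 i a else if a ∈ A2 then s2 i a
      else (hpos i a).choose, ?_, ?_⟩
    · intro i a
      by_cases h1 : a ∈ A1
      · simpa [h1] using hs1 i a h1
      · by_cases h2 : a ∈ A2
        · simpa [h1, h2] using hs2 i a h2
        · simpa [h1, h2] using (hpos i a).choose_spec
    · have key2 : ∀ i a, a ∈ A2 →
        (if a ∈ A1 then s1 i a else if a ∈ A2 then s2 i a
          else (hpos i a).choose) = s2 i a := by
        intro i a h2
        by_cases h1 : a ∈ A1
        · obtain ⟨v, hv⟩ := hdet a (Finset.mem_inter.2 ⟨h1, h2⟩) i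
          have e1 : s1 i a = v := (hv _).1 (hs1 i a h1)
          have e2 : s2 i a = v := (hv _).1 (hs2 i a h2)
          simp [h1, e1, e2]
        · simp [h1, h2]
      intro fd hfd i j hX a ha
      rcases Finset.mem_union.1 hfd with hf | hf
      · have mem : ∀ b ∈ fd.1 ∪ fd.2, b ∈ A1 := fun b hb =>
          Finset.mem_sup.2 ⟨fd, hf, hb⟩
        have hX' : ∀ b ∈ fd.1, s1 i b = s1 j b := by
          intro b hb
          have h1 := mem b (Finset.mem_union_left _ hb)
          have := hX b hb
          simpa [h1] using this
        have := hf1 fd hf i j hX' a ha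
        have h1 := mem a (Finset.mem_union_right _ ha)
        simpa [h1] using this
      · have mem : ∀ b ∈ fd.1 ∪ fd.2, b ∈ A2 := fun b hb =>
          Finset.mem_sup.2 ⟨fd, hf, hb⟩
        have hX' : ∀ b ∈ fd.1, s2 i b = s2 j b := by
          intro b hb
          have h2 := mem b (Finset.mem_union_left _ hb)
          have := hX b hb
          simpa only [key2 i b h2, key2 j b h2] using this
        have := hf2 fd hf i j hX' a ha
        have h2 := mem a (Finset.mem_union_right _ ha)
        simp only [key2 i a h2, key2 j a h2]
        exact this
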